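/- Let N = (B, E, G) be an occurrence net and let b ∈ B be a redundant condition, i.e. either b• = ∅ and there exists b' ∈ B with b' ≠ b and b' ∈ (•b)•, or •b = ∅ and there exists b' ∈ B with b' ≠ b, b• = b'• and •b' ≠ ∅. Let N' be the net obtained from N by deleting b and all flow arcs incident to b. Then the ordering relations among events are unchanged: for all events e, f ∈ E, (e,f) ∈ G'* iff (e,f) ∈ G*, and e #_{N'} f iff e #_N f; consequently the concurrency relation restricted to events is also unchanged. -/

import Mathlib

open Relation Sum

/-- The preset `•x` of a node of a net with flow relation `flow`. -/
def preset {C E : Type*} (flow : (C ⊕ E) → (C ⊕ E) → Prop) (x : C ⊕ E) : Set (C ⊕ E) :=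
  {y | flow y x}

/-- The postset `x•` of a node of a net with flow relation `flow`. -/
def postset {C E : Type*} (flow : (C ⊕ E) → (C ⊕ E) → Prop) (x : C ⊕ E) : Set (C ⊕ E) :=
  {y | flow x y}

/-- Causal relation `x ⇝ y` iff `(x,y) ∈ G⁺`. -/
def Causal {C E : Type*} (flow : (C ⊕ E) → (C ⊕ E) → Prop) (x y : C ⊕ E) : Prop :=
  TransGen flow x y

/-- Conflict `x # y` : two distinct events with a common pre-node reach `x` and `y`. -/
def InConflict {C E : Type*} (flow : (C ⊕ E) → (C ⊕ E) → Prop) (x y : C ⊕ E) : Prop :=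
  ∃ t₁ t₂ : E, t₁ ≠ t₂ ∧ (preset flow (inr t₁) ∩ preset flow (inr t₂)).Nonempty ∧
    ReflTransGen flow (inr t₁) x ∧ ReflTransGen flow (inr t₂) y

/-- Concurrency `x ∥ y` : neither causal (either way) nor conflict. -/
def Concurrent {C E : Type*} (flow : (C ⊕ E) → (C ⊕ E) → Prop) (x y : C ⊕ E) : Prop :=
  ¬ Causal flow x y ∧ ¬ Causal flow y x ∧ ¬ InConflict flow x y

/-- The flow relation only connects conditions to events and events to conditions. -/
def IsNet {C E : Type*} (flow : (C ⊕ E) → (C ⊕ E) → Prop) : Prop :=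
  ∀ x y, flow x y → (∃ (b : C) (e : E), x = inl b ∧ y = inr e) ∨
    ∃ (e : E) (b : C), x = inr e ∧ y = inl b

/-- Occurrence net: every condition has at most one pre-event, the net is acyclic,
every node has finitely many causal predecessors, no event is in self-conflict. -/
def IsOccurrenceNet {C E : Type*} (flow : (C ⊕ E) → (C ⊕ E) → Prop) : Prop :=
  IsNet flow ∧
  (∀ b : C, (preset flow (inl b)).Subsingleton) ∧
  Irreflexive (Causal flow) ∧
  (∀ x : C ⊕ E, {y | Causal flow y x}.Finite) ∧
  ∀ e : E, ¬ InConflict flow (inr e) (inr e)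

/-- The flow relation of the net obtained by deleting condition `b` together with
all flow arcs incident to it. -/
def DeleteCond {C E : Type*} (flow : (C ⊕ E) → (C ⊕ E) → Prop) (b : C) :
    (C ⊕ E) → (C ⊕ E) → Prop :=
  fun x y => flow x y ∧ x ≠ inl b ∧ y ≠ inl b

/-- A condition `b` is redundant: either `b• = ∅` and some other condition
`b' ∈ (•b)•`, or `•b = ∅` and some other condition `b'` has `b• = b'•` and
`•b' ≠ ∅`. -/
def Redundant {C E : Type*} (flow : (C ⊕ E) → (C ⊕ E) → Prop) (b : C) : Prop :=
  (postset flow (inl b) = ∅ ∧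
    ∃ b' : C, b' ≠ b ∧ ∃ x ∈ preset flow (inl b), flow x (inl b')) ∨
  (preset flow (inl b) = ∅ ∧
    ∃ b' : C, b' ≠ b ∧ postset flow (inl b) = postset flow (inl b') ∧
      (preset flow (inl b')).Nonempty)


section Aux
variable {C E : Type*} {flow : (C ⊕ E) → (C ⊕ E) → Prop} {b : C}

lemma rtg_lift (hb : postset flow (inl b) = ∅ ∨ preset flow (inl b) = ∅)
    {x y : C ⊕ E} (hx : x ≠ inl b) (hy : y ≠ inl b)
    (h : ReflTransGen flow x y) : ReflTransGen (DeleteCond flow b) x y := by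
  rcases hb with hb | hb
  · clear hx
    induction h with
    | refl => exact .refl
    | @tail c d h1 h2 ih =>
      have hc : c ≠ inl b := by
        rintro rfl
        exact Set.eq_empty_iff_forall_notMem.mp hb _ h2
      exact (ih hc).tail ⟨h2, hc, hy⟩
  · clear hy
    induction h using ReflTransGen.head_induction_on with
    | refl => exact .refl
    | head h1 h2 ih =>
      rename_i a c
      have hc : c ≠ inl b := by
        rintro rfl
        exact Set.eq_empty_iff_forall_notMem.mp hb _ h1
      exact (ih hc).head ⟨h1, hx, hc⟩

lemma tg_lift (hb : postset flow (inl b) = ∅ ∨ preset flow (inl b) = ∅)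
    {x y : C ⊕ E} (hx : x ≠ inl b) (hy : y ≠ inl b)
    (h : TransGen flow x y) : TransGen (DeleteCond flow b) x y := by
  rcases hb with hb | hb
  · clear hx
    induction h with
    | single h1 =>
      exact .single ⟨h1, by rintro rfl; exact Set.eq_empty_iff_forall_notMem.mp hb _ h1, hy⟩
    | @tail c d h1 h2 ih =>
      have hc : c ≠ inl b := by
        rintro rfl
        exact Set.eq_empty_iff_forall_notMem.mp hb _ h2
      exact (ih hc).tail ⟨h2, hc, hy⟩
  · clear hy
    induction h using TransGen.head_induction_on with
    | single h1 =>
      rename_i a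
      exact .single ⟨h1, hx, by rintro rfl; exact Set.eq_empty_iff_forall_notMem.mp hb _ h1⟩
    | head h1 h2 ih =>
      rename_i a c
      have hc : c ≠ inl b := by
        rintro rfl
        exact Set.eq_empty_iff_forall_notMem.mp hb _ h1
      exact (ih hc).head ⟨h1, hx, hc⟩

end Aux

/-- Deleting a redundant condition `b` from an occurrence net
leaves the ordering relations among events unchanged: causality (`G*`), conflict,
and hence also concurrency restricted to events are preserved. -/
theorem stmt15 {C E : Type*} (flow : (C ⊕ E) → (C ⊕ E) → Prop)
    (hocc : IsOccurrenceNet flow) (b : C) (hred : Redundant flow b) :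
    ∀ e f : E,
      (ReflTransGen (DeleteCond flow b) (inr e) (inr f) ↔
        ReflTransGen flow (inr e) (inr f)) ∧
      (InConflict (DeleteCond flow b) (inr e) (inr f) ↔ InConflict flow (inr e) (inr f)) ∧
      (Concurrent (DeleteCond flow b) (inr e) (inr f) ↔ Concurrent flow (inr e) (inr f)) := by
  have hb : postset flow (inl b) = ∅ ∨ preset flow (inl b) = ∅ := by
    rcases hred with ⟨h, _⟩ | ⟨h, _⟩
    · exact Or.inl h
    · exact Or.inr h
  have hRTG : ∀ x y : C ⊕ E, x ≠ inl b → y ≠ inl b →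
      (ReflTransGen (DeleteCond flow b) x y ↔ ReflTransGen flow x y) := by
    intro x y hx hy
    exact ⟨fun h => ReflTransGen.mono (fun _ _ h => h.1) _ _ h, fun h => rtg_lift hb hx hy h⟩
  have hC : ∀ g h : E, Causal (DeleteCond flow b) (inr g) (inr h) ↔
      Causal flow (inr g) (inr h) := by
    intro g h
    exact ⟨fun h => TransGen.mono (fun _ _ h => h.1) _ _ h,
      fun h => tg_lift hb (by simp) (by simp) h⟩
  have hConf : ∀ g h : E, InConflict (DeleteCond flow b) (inr g) (inr h) ↔
      InConflict flow (inr g) (inr h) := by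
    intro g h
    constructor
    · rintro ⟨t₁, t₂, hne, ⟨x, hx1, hx2⟩, h1, h2⟩
      exact ⟨t₁, t₂, hne, ⟨x, hx1.1, hx2.1⟩, ReflTransGen.mono (fun _ _ h => h.1) _ _ h1,
        ReflTransGen.mono (fun _ _ h => h.1) _ _ h2⟩
    · rintro ⟨t₁, t₂, hne, ⟨x, hx1, hx2⟩, h1, h2⟩
      have h1' := rtg_lift hb (x := inr t₁) (by simp) (by simp) h1
      have h2' := rtg_lift hb (x := inr t₂) (by simp) (by simp) h2
      by_cases hxb : x = inl b
      · subst hxb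
        rcases hred with ⟨hpost, _⟩ | ⟨hpre, b', hb', hpp, _⟩
        · exact absurd (Set.eq_empty_iff_forall_notMem.mp hpost _ hx1) not_false
        · have hx1' : flow (inl b') (inr t₁) := by
            have : (inr t₁ : C ⊕ E) ∈ postset flow (inl b) := hx1
            rw [hpp] at this; exact this
          have hx2' : flow (inl b') (inr t₂) := by
            have : (inr t₂ : C ⊕ E) ∈ postset flow (inl b) := hx2
            rw [hpp] at this; exact this
          have hb'' : (inl b' : C ⊕ E) ≠ inl b := by simpa using hb'
          exact ⟨t₁, t₂, hne, ⟨inl b', ⟨hx1', hb'', by simp⟩, ⟨hx2', hb'', by simp⟩⟩, h1', h2'⟩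
      · exact ⟨t₁, t₂, hne, ⟨x, ⟨hx1, hxb, by simp⟩, ⟨hx2, hxb, by simp⟩⟩, h1', h2'⟩
  intro e f
  refine ⟨hRTG _ _ (by simp) (by simp), hConf e f, ?_⟩
  unfold Concurrent
  rw [hC e f, hC f e, hConf e f]
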